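/- Let (Z1, Z2) be a bivariate standard Gaussian random vector with correlation ρ ∈ (-1,1), and let η1, η2 ∈ ℝ. Then P(Z1 ≥ η1, Z2 ≥ η2) = P(Z1 ≥ η1)·P(Z2 ≥ η2) + ∫₀^ρ φ₂(η1, η2 | x) dx, where φ₂(·,·|x) is the density of a bivariate standard Gaussian with correlation x. -/

import Mathlib

open MeasureTheory Real Filter Topology

/-- Joint density of a bivariate Gaussian with zero means, unit variances and
correlation `x`. -/
noncomputable def phi2 (u v x : ℝ) : ℝ :=
  (1 / (2 * Real.pi * Real.sqrt (1 - x ^ 2))) *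
    Real.exp (-(u ^ 2 - 2 * x * u * v + v ^ 2) / (2 * (1 - x ^ 2)))

/-- Density of a standard Gaussian. -/
noncomputable def stdGaussPDF (z : ℝ) : ℝ :=
  (Real.sqrt (2 * Real.pi))⁻¹ * Real.exp (-z ^ 2 / 2)

noncomputable def gg (u v x : ℝ) : ℝ :=
  phi2 u v x * (x / (1 - x ^ 2) + (x * v - u) * (x * u - v) / (1 - x ^ 2) ^ 2)

lemma hasDerivAt_phi2_x (u v x : ℝ) (hx : x ∈ Set.Ioo (-1 : ℝ) 1) :
    HasDerivAt (fun x => phi2 u v x) (gg u v x) x := by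
  have hs : 0 < 1 - x ^ 2 := by obtain ⟨h1, h2⟩ := hx; nlinarith
  have ht : 0 < Real.sqrt (1 - x ^ 2) := Real.sqrt_pos.2 hs
  have h1 : HasDerivAt (fun x : ℝ => 1 - x ^ 2) (-(2 * x)) x := by
    have := (hasDerivAt_pow 2 x).const_sub 1
    refine this.congr_deriv (Eq.symm ?_); ring
  have h2 : HasDerivAt (fun x : ℝ => Real.sqrt (1 - x ^ 2))
      (1 / (2 * Real.sqrt (1 - x ^ 2)) * (-(2 * x))) x :=
    (Real.hasDerivAt_sqrt hs.ne').comp x h1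
  have h3 : HasDerivAt (fun x : ℝ => 2 * Real.pi * Real.sqrt (1 - x ^ 2))
      (2 * Real.pi * (1 / (2 * Real.sqrt (1 - x ^ 2)) * (-(2 * x)))) x := h2.const_mul _
  have hne : 2 * Real.pi * Real.sqrt (1 - x ^ 2) ≠ 0 := by positivity
  have hc : HasDerivAt (fun x : ℝ => 1 / (2 * Real.pi * Real.sqrt (1 - x ^ 2)))
      (x / (2 * Real.pi * Real.sqrt (1 - x ^ 2) * (1 - x ^ 2))) x := by
    have h4 := (hasDerivAt_const x (1 : ℝ)).div h3 hne
    refine h4.congr_deriv (Eq.symm ?_)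
    field_simp
    linear_combination x * Real.sq_sqrt hs.le
  have hN : HasDerivAt (fun x : ℝ => -(u ^ 2 - 2 * x * u * v + v ^ 2)) (2 * u * v) x := by
    have ha := (((hasDerivAt_id x).const_mul (2 : ℝ)).mul_const u).mul_const v
    have hb := ((ha.const_sub (u ^ 2)).add_const (v ^ 2)).neg
    refine hb.congr_deriv (Eq.symm ?_)
    norm_num
  have hD : HasDerivAt (fun x : ℝ => 2 * (1 - x ^ 2)) (2 * (-(2 * x))) x := h1.const_mul 2
  have hDne : 2 * (1 - x ^ 2) ≠ 0 := by positivity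
  have hQ : HasDerivAt (fun x : ℝ => -(u ^ 2 - 2 * x * u * v + v ^ 2) / (2 * (1 - x ^ 2)))
      ((u * v * (1 - x ^ 2) - x * (u ^ 2 - 2 * x * u * v + v ^ 2)) / (1 - x ^ 2) ^ 2) x := by
    have := hN.div hD hDne
    refine this.congr_deriv (Eq.symm ?_)
    field_simp
  have := hc.mul hQ.exp
  refine this.congr_deriv (Eq.symm ?_)
  unfold gg phi2
  field_simp
  ring

noncomputable def hh (u v x : ℝ) : ℝ := phi2 u v x * ((x * v - u) / (1 - x ^ 2))

lemma tendsto_exp_quad (a b c : ℝ) (ha : 0 < a) :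
    Tendsto (fun v : ℝ => Real.exp (-a * v ^ 2 + b * v + c)) atTop (𝓝 0) := by
  apply Real.tendsto_exp_atBot.comp
  have h1 : Tendsto (fun v : ℝ => a * v - b) atTop atTop :=
    tendsto_atTop_add_const_right atTop (-b) (tendsto_id.const_mul_atTop ha)
  have h2 : Tendsto (fun v : ℝ => v * (a * v - b)) atTop atTop :=
    tendsto_id.atTop_mul_atTop₀ h1
  have h3 := tendsto_atTop_add_const_right atTop (-c) h2
  have h4 := tendsto_neg_atTop_atBot.comp h3
  exact h4.congr fun v => by simp; ring

lemma tendsto_mul_exp_quad (a b c : ℝ) (ha : 0 < a) :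
    Tendsto (fun v : ℝ => v * Real.exp (-a * v ^ 2 + b * v + c)) atTop (𝓝 0) := by
  have h1 : Tendsto (fun v : ℝ => Real.exp c * (v * Real.exp (-v))) atTop (𝓝 0) := by
    simpa using (tendsto_pow_mul_exp_neg_atTop_nhds_zero 1).const_mul (Real.exp c)
  apply squeeze_zero_norm' _ h1
  filter_upwards [eventually_ge_atTop (0 : ℝ), eventually_ge_atTop ((b + 1) / a)]
    with v hv0 hv1
  have hba : b + 1 ≤ a * v := by rw [div_le_iff₀ ha] at hv1; linarith [hv1]
  have hq : -a * v ^ 2 + b * v + c ≤ -v + c := by nlinarith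
  calc ‖v * Real.exp (-a * v ^ 2 + b * v + c)‖
      = v * Real.exp (-a * v ^ 2 + b * v + c) := by
        rw [Real.norm_eq_abs, abs_mul, abs_of_nonneg hv0,
          abs_of_nonneg (Real.exp_pos _).le]
    _ ≤ v * Real.exp (-v + c) := by
        apply mul_le_mul_of_nonneg_left (Real.exp_le_exp.2 hq) hv0
    _ = Real.exp c * (v * Real.exp (-v)) := by rw [Real.exp_add]; ring

lemma exp_arg_eq (u v x : ℝ) (hs : 0 < 1 - x ^ 2) :
    -(u ^ 2 - 2 * x * u * v + v ^ 2) / (2 * (1 - x ^ 2)) =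
      -(1 / (2 * (1 - x ^ 2))) * v ^ 2 + (x * u / (1 - x ^ 2)) * v +
        (-(u ^ 2) / (2 * (1 - x ^ 2))) := by
  field_simp
  ring

lemma tendsto_phi2_u (v x : ℝ) (hs : 0 < 1 - x ^ 2) :
    Tendsto (fun u => phi2 u v x) atTop (𝓝 0) := by
  have he : (fun u => phi2 u v x) = fun u =>
      (1 / (2 * Real.pi * Real.sqrt (1 - x ^ 2))) *
        Real.exp (-(1 / (2 * (1 - x ^ 2))) * u ^ 2 + (x * v / (1 - x ^ 2)) * u +
          (-(v ^ 2) / (2 * (1 - x ^ 2)))) := by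
    funext u
    unfold phi2
    rw [show -(u ^ 2 - 2 * x * u * v + v ^ 2) = -(v ^ 2 - 2 * x * v * u + u ^ 2) by ring,
      exp_arg_eq v u x hs]
  rw [he]
  simpa using (tendsto_exp_quad _ _ _ (by positivity)).const_mul
    (1 / (2 * Real.pi * Real.sqrt (1 - x ^ 2)))

lemma tendsto_hh_v (u x : ℝ) (hs : 0 < 1 - x ^ 2) :
    Tendsto (fun v => hh u v x) atTop (𝓝 0) := by
  have ht : 0 < Real.sqrt (1 - x ^ 2) := Real.sqrt_pos.2 hs
  have ha : 0 < 1 / (2 * (1 - x ^ 2)) := by positivity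
  have h1 := tendsto_mul_exp_quad (1 / (2 * (1 - x ^ 2))) (x * u / (1 - x ^ 2))
    (-(u ^ 2) / (2 * (1 - x ^ 2))) ha
  have h2 := tendsto_exp_quad (1 / (2 * (1 - x ^ 2))) (x * u / (1 - x ^ 2))
    (-(u ^ 2) / (2 * (1 - x ^ 2))) ha
  have h3 := ((h1.const_mul x).sub (h2.const_mul u)).const_mul
    (1 / (2 * Real.pi * Real.sqrt (1 - x ^ 2) * (1 - x ^ 2)))
  rw [show (1 / (2 * Real.pi * Real.sqrt (1 - x ^ 2) * (1 - x ^ 2)) *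
      (x * (0:ℝ) - u * 0)) = 0 by ring] at h3
  apply h3.congr
  intro v
  unfold hh phi2
  rw [exp_arg_eq u v x hs]
  field_simp

noncomputable def bnd (δ u v : ℝ) : ℝ :=
  1 / (2 * Real.pi * Real.sqrt δ) * (1 / δ + 2 / δ ^ 2) *
    ((1 + u ^ 2 + v ^ 2) * Real.exp (-(u ^ 2 + v ^ 2) / 4))

lemma phi2_nonneg (u v x : ℝ) : 0 ≤ phi2 u v x := by
  unfold phi2; positivity

lemma exp_bound (u v x : ℝ) (hs : 0 < 1 - x ^ 2) :
    Real.exp (-(u ^ 2 - 2 * x * u * v + v ^ 2) / (2 * (1 - x ^ 2))) ≤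
      Real.exp (-(u ^ 2 + v ^ 2) / 4) := by
  apply Real.exp_le_exp.2
  rw [div_le_div_iff₀ (by positivity) (by norm_num : (0:ℝ) < 4)]
  nlinarith [sq_nonneg (x * u - v), sq_nonneg (x * v - u)]

lemma phi2_le_bnd (u v x δ : ℝ) (hδ : 0 < δ) (hδx : δ ≤ 1 - x ^ 2) :
    phi2 u v x ≤ bnd δ u v := by
  have hs : 0 < 1 - x ^ 2 := lt_of_lt_of_le hδ hδx
  have hδ1 : δ ≤ 1 := by nlinarith [sq_nonneg x]
  have hsq : Real.sqrt δ ≤ Real.sqrt (1 - x ^ 2) := Real.sqrt_le_sqrt hδx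
  have hsδ : 0 < Real.sqrt δ := Real.sqrt_pos.2 hδ
  have hc : 1 / (2 * Real.pi * Real.sqrt (1 - x ^ 2)) ≤ 1 / (2 * Real.pi * Real.sqrt δ) := by
    gcongr
  have h1 : (1:ℝ) ≤ (1 / δ + 2 / δ ^ 2) * (1 + u ^ 2 + v ^ 2) := by
    have : (1:ℝ) ≤ 1 / δ := by rw [le_div_iff₀ hδ]; linarith
    nlinarith [sq_nonneg u, sq_nonneg v, div_nonneg (by norm_num : (0:ℝ) ≤ 2) (sq_nonneg δ)]
  unfold phi2 bnd
  calc 1 / (2 * Real.pi * Real.sqrt (1 - x ^ 2)) *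
        Real.exp (-(u ^ 2 - 2 * x * u * v + v ^ 2) / (2 * (1 - x ^ 2)))
      ≤ 1 / (2 * Real.pi * Real.sqrt δ) * Real.exp (-(u ^ 2 + v ^ 2) / 4) := by
        apply mul_le_mul hc (exp_bound u v x hs) (Real.exp_pos _).le (by positivity)
    _ ≤ 1 / (2 * Real.pi * Real.sqrt δ) * (1 / δ + 2 / δ ^ 2) *
        ((1 + u ^ 2 + v ^ 2) * Real.exp (-(u ^ 2 + v ^ 2) / 4)) := by
        have hpos : (0:ℝ) ≤ 1 / (2 * Real.pi * Real.sqrt δ) *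
            Real.exp (-(u ^ 2 + v ^ 2) / 4) := by positivity
        nlinarith [mul_le_mul_of_nonneg_left h1 hpos]

lemma abs_hh_le_bnd (u v x δ : ℝ) (hδ : 0 < δ) (hδx : δ ≤ 1 - x ^ 2) :
    |hh u v x| ≤ bnd δ u v := by
  have hs : 0 < 1 - x ^ 2 := lt_of_lt_of_le hδ hδx
  have hx1 : |x| ≤ 1 := by
    rw [abs_le]; constructor <;> nlinarith [sq_nonneg x]
  have hsδ : 0 < Real.sqrt δ := Real.sqrt_pos.2 hδ
  have hsq : Real.sqrt δ ≤ Real.sqrt (1 - x ^ 2) := Real.sqrt_le_sqrt hδx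
  have key : |(x * v - u) / (1 - x ^ 2)| ≤ (1 + u ^ 2 + v ^ 2) / δ := by
    rw [abs_div, abs_of_pos hs, div_le_div_iff₀ hs hδ]
    have h1 : |x * v - u| ≤ |v| + |u| := by
      calc |x * v - u| ≤ |x * v| + |u| := abs_sub _ _
        _ ≤ |v| + |u| := by
            rw [abs_mul]
            have := mul_le_mul_of_nonneg_right hx1 (abs_nonneg v)
            linarith
    have h2 : |v| + |u| ≤ 1 + u ^ 2 + v ^ 2 := by
      nlinarith [sq_nonneg (|u| - 1), sq_nonneg (|v| - 1), abs_nonneg u, abs_nonneg v,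
        sq_abs u, sq_abs v]
    calc |x * v - u| * δ ≤ (1 + u ^ 2 + v ^ 2) * δ := by
          apply mul_le_mul_of_nonneg_right (h1.trans h2) hδ.le
      _ ≤ (1 + u ^ 2 + v ^ 2) * (1 - x ^ 2) := by
          apply mul_le_mul_of_nonneg_left hδx (by positivity)
  unfold hh
  rw [abs_mul, abs_of_nonneg (phi2_nonneg u v x)]
  calc phi2 u v x * |(x * v - u) / (1 - x ^ 2)|
      ≤ (1 / (2 * Real.pi * Real.sqrt δ) * Real.exp (-(u ^ 2 + v ^ 2) / 4)) *
        ((1 + u ^ 2 + v ^ 2) / δ) := by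
        apply mul_le_mul _ key (abs_nonneg _) (by positivity)
        unfold phi2
        apply mul_le_mul _ (exp_bound u v x hs) (Real.exp_pos _).le (by positivity)
        gcongr
    _ = 1 / (2 * Real.pi * Real.sqrt δ) * (1 / δ) *
        ((1 + u ^ 2 + v ^ 2) * Real.exp (-(u ^ 2 + v ^ 2) / 4)) := by ring
    _ ≤ bnd δ u v := by
        unfold bnd
        have h2 : (1:ℝ) / δ ≤ 1 / δ + 2 / δ ^ 2 :=
          le_add_of_nonneg_right (by positivity)
        gcongr

lemma abs_gg_le_bnd (u v x δ : ℝ) (hδ : 0 < δ) (hδx : δ ≤ 1 - x ^ 2) :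
    |gg u v x| ≤ bnd δ u v := by
  have hs : 0 < 1 - x ^ 2 := lt_of_lt_of_le hδ hδx
  have hx1 : |x| ≤ 1 := by
    rw [abs_le]; constructor <;> nlinarith [sq_nonneg x]
  have hsδ : 0 < Real.sqrt δ := Real.sqrt_pos.2 hδ
  have habs : ∀ w z : ℝ, |x * w - z| ≤ |w| + |z| := by
    intro w z
    calc |x * w - z| ≤ |x * w| + |z| := abs_sub _ _
      _ ≤ |w| + |z| := by
          rw [abs_mul]
          have := mul_le_mul_of_nonneg_right hx1 (abs_nonneg w)
          linarith
  have key : |x / (1 - x ^ 2) + (x * v - u) * (x * u - v) / (1 - x ^ 2) ^ 2| ≤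
      (1 / δ + 2 / δ ^ 2) * (1 + u ^ 2 + v ^ 2) := by
    have k1 : |x / (1 - x ^ 2)| ≤ 1 / δ := by
      rw [abs_div, abs_of_pos hs, div_le_div_iff₀ hs hδ]
      nlinarith [mul_le_mul_of_nonneg_right hx1 hδ.le]
    have k2 : |(x * v - u) * (x * u - v) / (1 - x ^ 2) ^ 2| ≤
        2 * (1 + u ^ 2 + v ^ 2) / δ ^ 2 := by
      rw [abs_div, abs_of_pos (by positivity : (0:ℝ) < (1 - x ^ 2) ^ 2),
        div_le_div_iff₀ (by positivity) (by positivity)]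
      have h1 : |(x * v - u) * (x * u - v)| ≤ (|v| + |u|) * (|u| + |v|) := by
        rw [abs_mul]
        exact mul_le_mul (habs v u) (habs u v) (abs_nonneg _) (by positivity)
      have h2 : (|v| + |u|) * (|u| + |v|) ≤ 2 * (1 + u ^ 2 + v ^ 2) := by
        nlinarith [sq_nonneg (|u| - |v|), sq_abs u, sq_abs v, abs_nonneg u, abs_nonneg v]
      have h3 : δ ^ 2 ≤ (1 - x ^ 2) ^ 2 := by nlinarith
      calc |(x * v - u) * (x * u - v)| * δ ^ 2 ≤ (2 * (1 + u ^ 2 + v ^ 2)) * δ ^ 2 := by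
            apply mul_le_mul_of_nonneg_right (h1.trans h2) (by positivity)
        _ ≤ 2 * (1 + u ^ 2 + v ^ 2) * (1 - x ^ 2) ^ 2 := by
            apply mul_le_mul_of_nonneg_left h3 (by positivity)
    calc |x / (1 - x ^ 2) + (x * v - u) * (x * u - v) / (1 - x ^ 2) ^ 2|
        ≤ |x / (1 - x ^ 2)| + |(x * v - u) * (x * u - v) / (1 - x ^ 2) ^ 2| := abs_add_le _ _
      _ ≤ 1 / δ + 2 * (1 + u ^ 2 + v ^ 2) / δ ^ 2 := add_le_add k1 k2
      _ ≤ (1 / δ + 2 / δ ^ 2) * (1 + u ^ 2 + v ^ 2) := by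
          rw [add_mul]
          apply add_le_add
          · rw [div_mul_eq_mul_div, div_le_div_iff₀ hδ hδ]
            nlinarith [sq_nonneg u, sq_nonneg v]
          · rw [div_mul_eq_mul_div]
  unfold gg
  rw [abs_mul, abs_of_nonneg (phi2_nonneg u v x)]
  calc phi2 u v x * |x / (1 - x ^ 2) + (x * v - u) * (x * u - v) / (1 - x ^ 2) ^ 2|
      ≤ (1 / (2 * Real.pi * Real.sqrt δ) * Real.exp (-(u ^ 2 + v ^ 2) / 4)) *
        ((1 / δ + 2 / δ ^ 2) * (1 + u ^ 2 + v ^ 2)) := by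
        apply mul_le_mul _ key (abs_nonneg _) (by positivity)
        unfold phi2
        apply mul_le_mul _ (exp_bound u v x hs) (Real.exp_pos _).le (by positivity)
        gcongr
    _ = bnd δ u v := by unfold bnd; ring

lemma bnd_le (δ u v : ℝ) (hδ : 0 < δ) :
    bnd δ u v ≤ 1 / (2 * Real.pi * Real.sqrt δ) * (1 / δ + 2 / δ ^ 2) * 9 *
      (Real.exp (-(1/8) * u ^ 2) * Real.exp (-(1/8) * v ^ 2)) := by
  have h1 : (1 + u ^ 2 + v ^ 2) * Real.exp (-(u ^ 2 + v ^ 2) / 4) ≤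
      9 * (Real.exp (-(1/8) * u ^ 2) * Real.exp (-(1/8) * v ^ 2)) := by
    rw [← Real.exp_add]
    have h2 : (1 + u ^ 2 + v ^ 2) ≤ 9 * Real.exp ((u ^ 2 + v ^ 2) / 8) := by
      nlinarith [Real.add_one_le_exp ((u ^ 2 + v ^ 2) / 8), sq_nonneg u, sq_nonneg v]
    calc (1 + u ^ 2 + v ^ 2) * Real.exp (-(u ^ 2 + v ^ 2) / 4)
        ≤ 9 * Real.exp ((u ^ 2 + v ^ 2) / 8) * Real.exp (-(u ^ 2 + v ^ 2) / 4) := by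
          apply mul_le_mul_of_nonneg_right h2 (Real.exp_pos _).le
      _ = 9 * Real.exp (-(1/8) * u ^ 2 + -(1/8) * v ^ 2) := by
          rw [mul_assoc, ← Real.exp_add]; ring_nf
  unfold bnd
  rw [mul_assoc (1 / (2 * Real.pi * Real.sqrt δ) * (1 / δ + 2 / δ ^ 2)) 9]
  have c0 : 0 ≤ 1 / (2 * Real.pi * Real.sqrt δ) * (1 / δ + 2 / δ ^ 2) :=
    mul_nonneg (by positivity)
      (add_nonneg (div_nonneg zero_le_one hδ.le) (div_nonneg (by norm_num) (sq_nonneg δ)))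
  apply mul_le_mul_of_nonneg_left h1 c0

lemma bnd_nonneg (δ u v : ℝ) (hδ : 0 < δ) : 0 ≤ bnd δ u v := by
  unfold bnd
  apply mul_nonneg
  apply mul_nonneg (by positivity)
  · exact add_nonneg (div_nonneg zero_le_one hδ.le) (div_nonneg (by norm_num) (sq_nonneg δ))
  · positivity

lemma continuous_bnd (δ : ℝ) : Continuous fun p : ℝ × ℝ => bnd δ p.1 p.2 := by
  unfold bnd; fun_prop

lemma integrable_bnd (δ : ℝ) (hδ : 0 < δ) :
    Integrable (fun p : ℝ × ℝ => bnd δ p.1 p.2) := by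
  have hprod : Integrable (fun p : ℝ × ℝ =>
      Real.exp (-(1/8) * p.1 ^ 2) * Real.exp (-(1/8) * p.2 ^ 2)) := by
    rw [MeasureTheory.Measure.volume_eq_prod]
    exact (integrable_exp_neg_mul_sq (by norm_num)).mul_prod
      (integrable_exp_neg_mul_sq (by norm_num))
  apply Integrable.mono' (hprod.const_mul
    (1 / (2 * Real.pi * Real.sqrt δ) * (1 / δ + 2 / δ ^ 2) * 9))
    (continuous_bnd δ).aestronglyMeasurable
  filter_upwards with p
  rw [Real.norm_eq_abs, abs_of_nonneg (bnd_nonneg δ p.1 p.2 hδ)]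
  have := bnd_le δ p.1 p.2 hδ
  linarith [this]

lemma integrable_bnd_right (δ u : ℝ) (hδ : 0 < δ) :
    Integrable (fun v : ℝ => bnd δ u v) := by
  have hint : Integrable (fun v : ℝ => (1 / (2 * Real.pi * Real.sqrt δ) *
      (1 / δ + 2 / δ ^ 2) * 9 * Real.exp (-(1/8) * u ^ 2)) *
      Real.exp (-(1/8) * v ^ 2)) :=
    (integrable_exp_neg_mul_sq (by norm_num)).const_mul _
  apply Integrable.mono' hint
  · have : Continuous fun v : ℝ => bnd δ u v := by unfold bnd; fun_prop
    exact this.aestronglyMeasurable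
  filter_upwards with v
  rw [Real.norm_eq_abs, abs_of_nonneg (bnd_nonneg δ u v hδ)]
  calc bnd δ u v ≤ 1 / (2 * Real.pi * Real.sqrt δ) * (1 / δ + 2 / δ ^ 2) * 9 *
      (Real.exp (-(1/8) * u ^ 2) * Real.exp (-(1/8) * v ^ 2)) := bnd_le δ u v hδ
    _ = 1 / (2 * Real.pi * Real.sqrt δ) * (1 / δ + 2 / δ ^ 2) * 9 *
        Real.exp (-(1/8) * u ^ 2) * Real.exp (-(1/8) * v ^ 2) := by ring

lemma integrable_bnd_left (δ v : ℝ) (hδ : 0 < δ) :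
    Integrable (fun u : ℝ => bnd δ u v) := by
  have hint : Integrable (fun u : ℝ => (1 / (2 * Real.pi * Real.sqrt δ) *
      (1 / δ + 2 / δ ^ 2) * 9 * Real.exp (-(1/8) * v ^ 2)) *
      Real.exp (-(1/8) * u ^ 2)) :=
    (integrable_exp_neg_mul_sq (by norm_num)).const_mul _
  apply Integrable.mono' hint
  · have : Continuous fun u : ℝ => bnd δ u v := by unfold bnd; fun_prop
    exact this.aestronglyMeasurable
  filter_upwards with u
  rw [Real.norm_eq_abs, abs_of_nonneg (bnd_nonneg δ u v hδ)]
  calc bnd δ u v ≤ 1 / (2 * Real.pi * Real.sqrt δ) * (1 / δ + 2 / δ ^ 2) * 9 *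
      (Real.exp (-(1/8) * u ^ 2) * Real.exp (-(1/8) * v ^ 2)) := bnd_le δ u v hδ
    _ = 1 / (2 * Real.pi * Real.sqrt δ) * (1 / δ + 2 / δ ^ 2) * 9 *
        Real.exp (-(1/8) * v ^ 2) * Real.exp (-(1/8) * u ^ 2) := by ring

lemma phi2_symm (u v x : ℝ) : phi2 u v x = phi2 v u x := by unfold phi2; ring_nf

lemma hasDerivAt_phi2_u (u v x : ℝ) (hs : 0 < 1 - x ^ 2) :
    HasDerivAt (fun u => phi2 u v x) (hh u v x) u := by
  have h1 : HasDerivAt (fun u : ℝ => -(u ^ 2 - 2 * x * u * v + v ^ 2) / (2 * (1 - x ^ 2)))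
      ((x * v - u) / (1 - x ^ 2)) u := by
    have h0 : HasDerivAt (fun u : ℝ => u ^ 2 - 2 * x * u * v + v ^ 2) (2 * u - 2 * x * v) u := by
      have ha := (hasDerivAt_pow 2 u).sub (((hasDerivAt_id u).const_mul (2 * x)).mul_const v)
      have hb := ha.add_const (v ^ 2)
      refine hb.congr_deriv (Eq.symm ?_) <;> ring
    have := (h0.neg).div_const (2 * (1 - x ^ 2))
    refine this.congr_deriv (Eq.symm ?_)
    field_simp; ring
  have := (h1.exp).const_mul (1 / (2 * Real.pi * Real.sqrt (1 - x ^ 2)))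
  refine this.congr_deriv (Eq.symm ?_)
  unfold hh phi2; ring

lemma hasDerivAt_phi2_v (u v x : ℝ) (hs : 0 < 1 - x ^ 2) :
    HasDerivAt (fun v => phi2 u v x) (phi2 u v x * ((x * u - v) / (1 - x ^ 2))) v := by
  have h := hasDerivAt_phi2_u v u x hs
  have he : (fun w => phi2 w u x) = fun w => phi2 u w x := funext fun w => phi2_symm w u x
  rw [he] at h
  unfold hh at h
  rwa [phi2_symm v u x] at h

lemma hasDerivAt_hh_v (u v x : ℝ) (hs : 0 < 1 - x ^ 2) :
    HasDerivAt (fun v => hh u v x) (gg u v x) v := by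
  have h1 := hasDerivAt_phi2_v u v x hs
  have h2 : HasDerivAt (fun v : ℝ => (x * v - u) / (1 - x ^ 2)) (x / (1 - x ^ 2)) v := by
    have := (((hasDerivAt_id v).const_mul x).sub_const u).div_const (1 - x ^ 2)
    refine this.congr_deriv (Eq.symm ?_); ring
  have := h1.mul h2
  refine this.congr_deriv (Eq.symm ?_)
  unfold gg
  field_simp
  ring


lemma continuous_phi2_p (x : ℝ) : Continuous fun p : ℝ × ℝ => phi2 p.1 p.2 x := by
  unfold phi2; fun_prop

lemma continuous_gg_p (x : ℝ) : Continuous fun p : ℝ × ℝ => gg p.1 p.2 x := by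
  unfold gg phi2; fun_prop

lemma continuous_gg_v (u x : ℝ) : Continuous fun v : ℝ => gg u v x := by
  unfold gg phi2; fun_prop

lemma continuous_hh_u (v x : ℝ) : Continuous fun u : ℝ => hh u v x := by
  unfold hh phi2; fun_prop

lemma integrableOn_gg_v (u x δ a : ℝ) (hδ : 0 < δ) (hδx : δ ≤ 1 - x ^ 2) :
    IntegrableOn (fun v => gg u v x) (Set.Ioi a) := by
  apply Integrable.mono' ((integrable_bnd_right δ u hδ).integrableOn)
    (continuous_gg_v u x).aestronglyMeasurable.restrict
  filter_upwards with v
  rw [Real.norm_eq_abs]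
  exact abs_gg_le_bnd u v x δ hδ hδx

lemma integral_gg_inner (u x η₂ : ℝ) (hx : x ∈ Set.Ioo (-1 : ℝ) 1) :
    ∫ v in Set.Ici η₂, gg u v x = -hh u η₂ x := by
  have hs : 0 < 1 - x ^ 2 := by obtain ⟨h1, h2⟩ := hx; nlinarith
  rw [MeasureTheory.integral_Ici_eq_integral_Ioi]
  have := integral_Ioi_of_hasDerivAt_of_tendsto'
    (f := fun v => hh u v x) (f' := fun v => gg u v x) (a := η₂) (m := 0)
    (fun v _ => hasDerivAt_hh_v u v x hs)
    (integrableOn_gg_v u x (1 - x ^ 2) η₂ hs le_rfl)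
    (tendsto_hh_v u x hs)
  simpa using this

lemma integral_hh_outer (x η₁ η₂ : ℝ) (hx : x ∈ Set.Ioo (-1 : ℝ) 1) :
    ∫ u in Set.Ici η₁, -hh u η₂ x = phi2 η₁ η₂ x := by
  have hs : 0 < 1 - x ^ 2 := by obtain ⟨h1, h2⟩ := hx; nlinarith
  rw [MeasureTheory.integral_Ici_eq_integral_Ioi]
  have hint : IntegrableOn (fun u => -hh u η₂ x) (Set.Ioi η₁) := by
    apply Integrable.mono' ((integrable_bnd_left (1 - x ^ 2) η₂ hs).integrableOn)
      ((continuous_hh_u η₂ x).neg).aestronglyMeasurable.restrict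
    filter_upwards with u
    rw [Real.norm_eq_abs, Pi.neg_apply, abs_neg]
    exact abs_hh_le_bnd u η₂ x (1 - x ^ 2) hs le_rfl
  have := integral_Ioi_of_hasDerivAt_of_tendsto'
    (f := fun u => -phi2 u η₂ x) (f' := fun u => -hh u η₂ x) (a := η₁) (m := 0)
    (fun u _ => (hasDerivAt_phi2_u u η₂ x hs).neg) hint
    (by simpa using (tendsto_phi2_u η₂ x hs).neg)
  simpa using this

lemma integrableOn_gg_prod (x η₁ η₂ δ : ℝ) (hδ : 0 < δ) (hδx : δ ≤ 1 - x ^ 2) :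
    IntegrableOn (fun p : ℝ × ℝ => gg p.1 p.2 x) (Set.Ici η₁ ×ˢ Set.Ici η₂) := by
  apply Integrable.mono' ((integrable_bnd δ hδ).integrableOn)
    (continuous_gg_p x).aestronglyMeasurable.restrict
  filter_upwards with p
  rw [Real.norm_eq_abs]
  exact abs_gg_le_bnd p.1 p.2 x δ hδ hδx

lemma integrableOn_phi2_prod (x η₁ η₂ δ : ℝ) (hδ : 0 < δ) (hδx : δ ≤ 1 - x ^ 2) :
    IntegrableOn (fun p : ℝ × ℝ => phi2 p.1 p.2 x) (Set.Ici η₁ ×ˢ Set.Ici η₂) := by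
  apply Integrable.mono' ((integrable_bnd δ hδ).integrableOn)
    (continuous_phi2_p x).aestronglyMeasurable.restrict
  filter_upwards with p
  rw [Real.norm_eq_abs, abs_of_nonneg (phi2_nonneg p.1 p.2 x)]
  exact phi2_le_bnd p.1 p.2 x δ hδ hδx

lemma integral_gg_prod (x η₁ η₂ : ℝ) (hx : x ∈ Set.Ioo (-1 : ℝ) 1) :
    ∫ p in Set.Ici η₁ ×ˢ Set.Ici η₂, gg p.1 p.2 x = phi2 η₁ η₂ x := by
  have hs : 0 < 1 - x ^ 2 := by obtain ⟨h1, h2⟩ := hx; nlinarith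
  have hInt := integrableOn_gg_prod x η₁ η₂ (1 - x ^ 2) hs le_rfl
  rw [MeasureTheory.Measure.volume_eq_prod] at hInt ⊢
  rw [MeasureTheory.setIntegral_prod _ hInt]
  calc ∫ u in Set.Ici η₁, ∫ v in Set.Ici η₂, gg u v x
      = ∫ u in Set.Ici η₁, -hh u η₂ x := by
        apply setIntegral_congr_fun measurableSet_Ici
        intro u _
        exact integral_gg_inner u x η₂ hx
    _ = phi2 η₁ η₂ x := integral_hh_outer x η₁ η₂ hx

lemma hasDerivAt_G (η₁ η₂ : ℝ) {x₀ : ℝ} (hx₀ : x₀ ∈ Set.Ioo (-1 : ℝ) 1) :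
    HasDerivAt (fun x => ∫ p in Set.Ici η₁ ×ˢ Set.Ici η₂, phi2 p.1 p.2 x)
      (phi2 η₁ η₂ x₀) x₀ := by
  obtain ⟨hx1, hx2⟩ := hx₀
  set ε := min (x₀ + 1) (1 - x₀) / 2 with hε_def
  have hε : 0 < ε :=
    div_pos (lt_min (by linarith) (by linarith)) two_pos
  set m := max ((x₀ + 1) / 2) ((1 - x₀) / 2) with hm_def
  have hm0 : 0 < m := lt_max_of_lt_left (by linarith)
  have hm1 : m < 1 := max_lt (by linarith) (by linarith)
  set δ := 1 - m ^ 2 with hδ_def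
  have hδ : 0 < δ := by rw [hδ_def]; nlinarith
  have hball : ∀ x ∈ Metric.ball x₀ ε, δ ≤ 1 - x ^ 2 ∧ x ∈ Set.Ioo (-1 : ℝ) 1 := by
    intro x hx
    rw [Metric.mem_ball, Real.dist_eq] at hx
    obtain ⟨ha, hb⟩ := abs_lt.1 hx
    have hεle1 : ε ≤ (x₀ + 1) / 2 := by
      rw [hε_def]; linarith [min_le_left (x₀ + 1) (1 - x₀)]
    have hεle2 : ε ≤ (1 - x₀) / 2 := by
      rw [hε_def]; linarith [min_le_right (x₀ + 1) (1 - x₀)]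
    have hxm1 : x ≤ m := by
      have : x < x₀ + ε := by linarith
      have : x < (x₀ + 1) / 2 := by linarith
      exact le_trans this.le (le_max_left _ _)
    have hxm2 : -m ≤ x := by
      have : x₀ - ε < x := by linarith
      have h2 : -((1 - x₀) / 2) < x := by linarith
      have := le_max_right ((x₀ + 1) / 2) ((1 - x₀) / 2)
      linarith
    have hsq : x ^ 2 ≤ m ^ 2 := sq_le_sq' hxm2 hxm1
    refine ⟨by rw [hδ_def]; linarith, ⟨by linarith, by linarith⟩⟩
  have hx₀ball : x₀ ∈ Metric.ball x₀ ε := Metric.mem_ball_self hε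
  have H := (hasDerivAt_integral_of_dominated_loc_of_deriv_le
    (μ := volume.restrict (Set.Ici η₁ ×ˢ Set.Ici η₂))
    (F := fun x (p : ℝ × ℝ) => phi2 p.1 p.2 x)
    (F' := fun x (p : ℝ × ℝ) => gg p.1 p.2 x)
    (x₀ := x₀) (bound := fun p => bnd δ p.1 p.2) (Metric.ball_mem_nhds x₀ hε)
    (Eventually.of_forall fun x => (continuous_phi2_p x).aestronglyMeasurable.restrict)
    (integrableOn_phi2_prod x₀ η₁ η₂ δ hδ (hball x₀ hx₀ball).1)
    (continuous_gg_p x₀).aestronglyMeasurable.restrict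
    (Eventually.of_forall fun p => fun x hx => by
      rw [Real.norm_eq_abs]
      exact abs_gg_le_bnd p.1 p.2 x δ hδ (hball x hx).1)
    ((integrable_bnd δ hδ).integrableOn)
    (Eventually.of_forall fun p => fun x hx =>
      hasDerivAt_phi2_x p.1 p.2 x (hball x hx).2)).2
  rwa [integral_gg_prod x₀ η₁ η₂ ⟨hx1, hx2⟩] at H

lemma phi2_zero (u v : ℝ) : phi2 u v 0 = stdGaussPDF u * stdGaussPDF v := by
  unfold phi2 stdGaussPDF
  have h2π : (0:ℝ) ≤ 2 * Real.pi := by positivity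
  have key : Real.sqrt (2 * Real.pi) * Real.sqrt (2 * Real.pi) = 2 * Real.pi :=
    Real.mul_self_sqrt h2π
  have hne : Real.sqrt (2 * Real.pi) ≠ 0 := by
    have : 0 < Real.sqrt (2 * Real.pi) := Real.sqrt_pos.2 (by positivity)
    exact this.ne'
  rw [show (1:ℝ) - 0 ^ 2 = 1 by norm_num, Real.sqrt_one,
    show -(u ^ 2 - 2 * 0 * u * v + v ^ 2) / (2 * (1:ℝ)) = -u ^ 2 / 2 + -v ^ 2 / 2 by ring,
    Real.exp_add]
  have hre : ((Real.sqrt (2 * Real.pi))⁻¹ * Real.exp (-u ^ 2 / 2)) *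
      ((Real.sqrt (2 * Real.pi))⁻¹ * Real.exp (-v ^ 2 / 2)) =
      (Real.sqrt (2 * Real.pi) * Real.sqrt (2 * Real.pi))⁻¹ *
        (Real.exp (-u ^ 2 / 2) * Real.exp (-v ^ 2 / 2)) := by
    rw [mul_inv]; ring
  rw [hre, key]
  norm_num

lemma G_zero (η₁ η₂ : ℝ) :
    ∫ p in Set.Ici η₁ ×ˢ Set.Ici η₂, phi2 p.1 p.2 0 =
      (∫ z in Set.Ici η₁, stdGaussPDF z) * (∫ z in Set.Ici η₂, stdGaussPDF z) := by
  rw [MeasureTheory.Measure.volume_eq_prod]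
  rw [show (fun p : ℝ × ℝ => phi2 p.1 p.2 0) = fun p : ℝ × ℝ => stdGaussPDF p.1 * stdGaussPDF p.2
    from funext fun p => phi2_zero p.1 p.2]
  exact MeasureTheory.setIntegral_prod_mul stdGaussPDF stdGaussPDF _ _

/-- Generalized arcsine law. -/
theorem generalized_arcsine_law (ρ : ℝ) (hρ : ρ ∈ Set.Ioo (-1 : ℝ) 1) (η₁ η₂ : ℝ) :
    ∫ p : ℝ × ℝ in {p : ℝ × ℝ | η₁ ≤ p.1 ∧ η₂ ≤ p.2}, phi2 p.1 p.2 ρ =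
      (∫ z in Set.Ici η₁, stdGaussPDF z) * (∫ z in Set.Ici η₂, stdGaussPDF z) +
        ∫ x in (0 : ℝ)..ρ, phi2 η₁ η₂ x := by
  obtain ⟨hρ1, hρ2⟩ := hρ
  have hsub : Set.uIcc 0 ρ ⊆ Set.Ioo (-1 : ℝ) 1 := by
    intro x hx
    rcases Set.mem_uIcc.1 hx with ⟨h1, h2⟩ | ⟨h1, h2⟩ <;>
      exact ⟨by linarith, by linarith⟩
  have hS : {p : ℝ × ℝ | η₁ ≤ p.1 ∧ η₂ ≤ p.2} = Set.Ici η₁ ×ˢ Set.Ici η₂ := by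
    ext p; simp only [Set.mem_setOf_eq, Set.mem_prod, Set.mem_Ici]
  have hcont : ContinuousOn (fun x => phi2 η₁ η₂ x) (Set.uIcc 0 ρ) := by
    have hpos : ∀ x ∈ Set.uIcc 0 ρ, 0 < 1 - x ^ 2 := by
      intro x hx
      obtain ⟨h1, h2⟩ := hsub hx
      nlinarith
    unfold phi2
    apply ContinuousOn.mul
    · apply ContinuousOn.div continuousOn_const
      · exact (continuous_const.mul (Real.continuous_sqrt.comp
          (by continuity : Continuous fun x : ℝ => 1 - x ^ 2))).continuousOn
      · intro x hx
        have h1 := hpos x hx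
        have h2 : 0 < Real.sqrt (1 - x ^ 2) := Real.sqrt_pos.2 h1
        positivity
    · apply Real.continuous_exp.comp_continuousOn
      apply ContinuousOn.div
      · exact (by continuity :
          Continuous fun x : ℝ => -(η₁ ^ 2 - 2 * x * η₁ * η₂ + η₂ ^ 2)).continuousOn
      · exact (by continuity : Continuous fun x : ℝ => 2 * (1 - x ^ 2)).continuousOn
      · intro x hx
        have := hpos x hx
        positivity
  have key := intervalIntegral.integral_eq_sub_of_hasDerivAt
    (f := fun x => ∫ p in Set.Ici η₁ ×ˢ Set.Ici η₂, phi2 p.1 p.2 x)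
    (f' := fun x => phi2 η₁ η₂ x)
    (fun x hx => hasDerivAt_G η₁ η₂ (hsub hx))
    hcont.intervalIntegrable
  rw [hS, key, G_zero]
  ring
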